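/- Conjunctive cumulative transitivity (the Cut rule identity): let A, B, C be events with P(A ∩ B) > 0. Then the conjunction (C|A∩B) ∧ (B|A) — i.e., the two-conditional conjunction with (A₀,H₀) := (C, A∩B) and (B₀,K₀) := (B, A) — coincides pointwise on Ω with the conditional event (B∩C)|A, the random variable equal to 1 on A∩B∩C, to 0 on A∖(B∩C), and to P(B∩C|A) on Aᶜ; in particular its prevision equals P(B∩C|A). -/
import Mathlib


open MeasureTheory
open scoped Classical

/-- `P(E|H) := P(E∩H)/P(H)`. -/
noncomputable def condProb {Ω : Type*} [MeasurableSpace Ω] (P : Measure Ω)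
    (E H : Set Ω) : ℝ :=
  (P (E ∩ H)).toReal / (P H).toReal

/-- The conditional event `E|H`: the random variable equal to `1` on `E∩H`, to `0` on
`H∖E`, and to `P(E|H)` on `Hᶜ`. -/
noncomputable def condEvent {Ω : Type*} [MeasurableSpace Ω] (P : Measure Ω)
    (E H : Set Ω) : Ω → ℝ := fun ω =>
  if ω ∈ E ∩ H then 1 else if ω ∈ H \ E then 0 else condProb P E H

/-- The prevision `z := [P(A∩H∩B∩K) + x·P(Hᶜ∩B∩K) + y·P(A∩H∩Kᶜ)]/P(H∪K)` of the
conjunction `(A|H) ∧ (B|K)`, where `x := P(A|H)` and `y := P(B|K)`. -/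
noncomputable def conjPrev {Ω : Type*} [MeasurableSpace Ω] (P : Measure Ω)
    (A H B K : Set Ω) : ℝ :=
  ((P (A ∩ H ∩ (B ∩ K))).toReal + condProb P A H * (P (Hᶜ ∩ (B ∩ K))).toReal +
      condProb P B K * (P (A ∩ H ∩ Kᶜ)).toReal) / (P (H ∪ K)).toReal

/-- The conjunction `(A|H) ∧ (B|K)`: the random variable equal to `1` on `A∩H∩B∩K`, to `0`
on `(H∖A) ∪ (K∖B)`, to `x := P(A|H)` on `Hᶜ∩B∩K`, to `y := P(B|K)` on `A∩H∩Kᶜ`, and to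
`z := [P(A∩H∩B∩K) + x·P(Hᶜ∩B∩K) + y·P(A∩H∩Kᶜ)]/P(H∪K)` on `Hᶜ∩Kᶜ`. -/
noncomputable def conj2 {Ω : Type*} [MeasurableSpace Ω] (P : Measure Ω)
    (A H B K : Set Ω) : Ω → ℝ := fun ω =>
  if ω ∈ A ∩ H ∩ (B ∩ K) then 1
  else if ω ∈ (H \ A) ∪ (K \ B) then 0
  else if ω ∈ Hᶜ ∩ (B ∩ K) then condProb P A H
  else if ω ∈ A ∩ H ∩ Kᶜ then condProb P B K
  else conjPrev P A H B K

/-- Conjunctive cumulative transitivity (the Cut rule identity): let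
`A, B, C` be events with `P(A ∩ B) > 0`.  Then the conjunction `(C|A∩B) ∧ (B|A)`
coincides pointwise on `Ω` with the conditional event `(B∩C)|A`; in particular its
prevision equals `P(B∩C|A)`. -/
theorem stmt17 {Ω : Type*} [MeasurableSpace Ω] (P : Measure Ω) [IsProbabilityMeasure P]
    (A B C : Set Ω) (hA : MeasurableSet A) (hB : MeasurableSet B) (hC : MeasurableSet C)
    (hAB : 0 < P (A ∩ B)) :
    (∀ ω : Ω, conj2 P C (A ∩ B) B A ω = condEvent P (B ∩ C) A ω) ∧
      conjPrev P C (A ∩ B) B A = condProb P (B ∩ C) A := by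
  have s1 : C ∩ (A ∩ B) ∩ (B ∩ A) = B ∩ C ∩ A := by ext ω; simp [Set.mem_inter_iff]; tauto
  have s2 : (A ∩ B)ᶜ ∩ (B ∩ A) = (∅ : Set Ω) := by ext ω; simp [Set.mem_inter_iff]; tauto
  have s3 : C ∩ (A ∩ B) ∩ Aᶜ = (∅ : Set Ω) := by ext ω; simp [Set.mem_inter_iff]; tauto
  have s4 : (A ∩ B) ∪ A = A := by ext ω; simp [Set.mem_inter_iff]; tauto
  have hz : conjPrev P C (A ∩ B) B A = condProb P (B ∩ C) A := by
    simp [conjPrev, condProb, s1, s2, s3, s4]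
  refine ⟨?_, hz⟩
  intro ω
  by_cases hωA : ω ∈ A <;> by_cases hωB : ω ∈ B <;> by_cases hωC : ω ∈ C <;>
    simp [conj2, condEvent, Set.mem_inter_iff, Set.mem_diff, Set.mem_union,
      Set.mem_compl_iff, hωA, hωB, hωC, hz]
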